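/- arXiv:2203.05774 — 3 statements merged into one kernel-verified Lean document; each statement's English description precedes it below -/
import Mathlib

section
/- Let X and S be real symmetric positive semi-definite n×n matrices. Then the matrix I + S·X is invertible and ‖X·(I + S·X)^{-1}‖ ≤ ‖X‖, where ‖·‖ is the spectral norm. -/
open Matrix

/-- The spectral norm (operator 2-norm) of a real matrix. -/
noncomputable def specNorm {m n : ℕ} (M : Matrix (Fin m) (Fin n) ℝ) : ℝ :=
  ‖LinearMap.toContinuousLinearMap (Matrix.toEuclideanLin M)‖

lemma inner_toEuc {n : ℕ} (M : Matrix (Fin n) (Fin n) ℝ) (x y : EuclideanSpace ℝ (Fin n)) :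
    (inner ℝ (LinearMap.toContinuousLinearMap (Matrix.toEuclideanLin M) x) y : ℝ)
      = (M *ᵥ (WithLp.equiv 2 _ x)) ⬝ᵥ (WithLp.equiv 2 _ y) := by
  simp [toEuclideanLin_apply, PiLp.inner_apply, dotProduct, mul_comm]

lemma opnorm_le_of_inner {E : Type*} [NormedAddCommGroup E] [InnerProductSpace ℝ E]
    (T : E →L[ℝ] E) (hsym : ∀ x y : E, (inner ℝ (T x) y : ℝ) = inner ℝ x (T y))
    {c : ℝ} (hc : 0 ≤ c) (h : ∀ x : E, |(inner ℝ (T x) x : ℝ)| ≤ c * ‖x‖ ^ 2) : ‖T‖ ≤ c := by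
  refine T.opNorm_le_bound hc fun x => ?_
  by_cases hTx : T x = 0
  · simp [hTx]
    positivity
  have hx : x ≠ 0 := fun h0 => hTx (by simp [h0])
  have key : ∀ y : E, 4 * (inner ℝ (T x) y : ℝ) ≤ 2 * c * (‖x‖ ^ 2 + ‖y‖ ^ 2) := by
    intro y
    have h1 := (abs_le.1 (h (x + y))).2
    have h2 := (abs_le.1 (h (x - y))).1
    have e1 : (inner ℝ (T (x + y)) (x + y) : ℝ)
        = inner ℝ (T x) x + 2 * inner ℝ (T x) y + inner ℝ (T y) y := by
      rw [map_add]
      simp only [inner_add_left, inner_add_right]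
      have : (inner ℝ (T y) x : ℝ) = inner ℝ (T x) y := by
        rw [hsym y x, real_inner_comm]
      rw [this]; ring
    have e2 : (inner ℝ (T (x - y)) (x - y) : ℝ)
        = inner ℝ (T x) x - 2 * inner ℝ (T x) y + inner ℝ (T y) y := by
      rw [map_sub]
      simp only [inner_sub_left, inner_sub_right]
      have : (inner ℝ (T y) x : ℝ) = inner ℝ (T x) y := by
        rw [hsym y x, real_inner_comm]
      rw [this]; ring
    have p1 : ‖x + y‖ ^ 2 = ‖x‖ ^ 2 + 2 * inner ℝ x y + ‖y‖ ^ 2 := by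
      rw [@norm_add_sq_real]
    have p2 : ‖x - y‖ ^ 2 = ‖x‖ ^ 2 - 2 * inner ℝ x y + ‖y‖ ^ 2 := by
      rw [@norm_sub_sq_real]
    rw [e1, p1] at h1
    rw [e2, p2] at h2
    nlinarith
  have hy := key ((‖x‖ / ‖T x‖) • T x)
  rw [real_inner_smul_right, real_inner_self_eq_norm_sq, norm_smul] at hy
  have hTx' : (0:ℝ) < ‖T x‖ := norm_pos_iff.2 hTx
  have hx' : (0:ℝ) < ‖x‖ := norm_pos_iff.2 hx
  have hns : ‖(‖x‖ / ‖T x‖)‖ = ‖x‖ / ‖T x‖ := by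
    rw [Real.norm_eq_abs, abs_of_nonneg (by positivity)]
  rw [hns] at hy
  have e3 : ‖x‖ / ‖T x‖ * ‖T x‖ ^ 2 = ‖x‖ * ‖T x‖ := by
    field_simp
  have e4 : (‖x‖ / ‖T x‖ * ‖T x‖) ^ 2 = ‖x‖ ^ 2 := by
    field_simp
  rw [e3, e4] at hy
  nlinarith

/-- If `X` and `S` are real symmetric positive semi-definite `n×n` matrices, then `I + S·X`
is invertible and `‖X·(I + S·X)⁻¹‖ ≤ ‖X‖` in the spectral norm. -/
theorem specNorm_mul_inv_one_add_le {n : ℕ} (X S : Matrix (Fin n) (Fin n) ℝ)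
    (hX : X.PosSemidef) (hS : S.PosSemidef) :
    IsUnit ((1 : Matrix (Fin n) (Fin n) ℝ) + S * X) ∧
      specNorm (X * ((1 : Matrix (Fin n) (Fin n) ℝ) + S * X)⁻¹) ≤ specNorm X := by
  have hXsym : Xᵀ = X := by simpa using hX.1.eq
  have hSsym : Sᵀ = S := by simpa using hS.1.eq
  have hUnit : IsUnit ((1 : Matrix (Fin n) (Fin n) ℝ) + S * X) := by
    rw [← Matrix.mulVec_injective_iff_isUnit]
    have hker : ∀ v : Fin n → ℝ, (1 + S * X) *ᵥ v = 0 → v = 0 := by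
      intro v hv
      rw [add_mulVec, one_mulVec, ← mulVec_mulVec] at hv
      have hveq : v = -(S *ᵥ (X *ᵥ v)) := by linear_combination (norm := module) hv
      have h1 : (0:ℝ) ≤ v ⬝ᵥ (X *ᵥ v) := by simpa using hX.dotProduct_mulVec_nonneg v
      have h2 : v ⬝ᵥ (X *ᵥ v) ≤ 0 := by
        nth_rewrite 1 [hveq]
        have := hS.dotProduct_mulVec_nonneg (X *ᵥ v)
        simp only [star_trivial] at this
        rw [neg_dotProduct, dotProduct_comm]
        linarith
      have h0 : v ⬝ᵥ (X *ᵥ v) = 0 := le_antisymm h2 h1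
      have hXv : X *ᵥ v = 0 := (hX.dotProduct_mulVec_zero_iff v).1 (by simpa using h0)
      rw [hveq, hXv, mulVec_zero, neg_zero]
    intro u v huv
    have h0 : (1 + S * X) *ᵥ (u - v) = 0 := by rw [mulVec_sub, huv, sub_self]
    exact sub_eq_zero.1 (hker _ h0)
  refine ⟨hUnit, ?_⟩
  set A : Matrix (Fin n) (Fin n) ℝ := 1 + S * X with hA
  set B : Matrix (Fin n) (Fin n) ℝ := A⁻¹ with hB
  have hdet : IsUnit A.det := (Matrix.isUnit_iff_isUnit_det A).1 hUnit
  have hAB : A * B = 1 := mul_nonsing_inv A hdet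
  have hAT : Aᵀ = 1 + X * S := by
    rw [hA, transpose_add, transpose_one, transpose_mul, hXsym, hSsym]
  have hdetT : IsUnit (1 + X * S).det := by
    rw [← hAT, det_transpose]; exact hdet
  have hcomm : (1 + X * S) * X = X * A := by
    rw [hA, add_mul, mul_add, one_mul, mul_one, mul_assoc]
  have hMX : (1 + X * S) * (X * B) = X := by
    rw [← mul_assoc, hcomm, mul_assoc, hAB, mul_one]
  have hMsym : (X * B)ᵀ = X * B := by
    have hBT : Bᵀ = (1 + X * S)⁻¹ := by rw [hB, transpose_nonsing_inv, hAT]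
    rw [transpose_mul, hXsym, hBT]
    calc (1 + X * S)⁻¹ * X = (1 + X * S)⁻¹ * ((1 + X * S) * (X * B)) := by rw [hMX]
      _ = X * B := by rw [← mul_assoc, nonsing_inv_mul _ hdetT, one_mul]
  -- dot product swap lemmas
  have hswapX : ∀ a b : Fin n → ℝ, a ⬝ᵥ (X *ᵥ b) = (X *ᵥ a) ⬝ᵥ b := by
    intro a b
    rw [Matrix.dotProduct_mulVec, ← Matrix.mulVec_transpose, hXsym]
  have hXq : ∀ a : Fin n → ℝ, (0:ℝ) ≤ a ⬝ᵥ (X *ᵥ a) := fun a => by simpa using hX.dotProduct_mulVec_nonneg a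
  have hSq : ∀ a : Fin n → ℝ, (0:ℝ) ≤ a ⬝ᵥ (S *ᵥ a) := fun a => by simpa using hS.dotProduct_mulVec_nonneg a
  -- apply the abstract lemma
  refine opnorm_le_of_inner _ ?_ (norm_nonneg _) ?_
  · intro x y
    have hswapM : ∀ a b : Fin n → ℝ, a ⬝ᵥ ((X * B) *ᵥ b) = ((X * B) *ᵥ a) ⬝ᵥ b := by
      intro a b
      rw [Matrix.dotProduct_mulVec, ← Matrix.mulVec_transpose, hMsym]
    rw [inner_toEuc, real_inner_comm, inner_toEuc, ← hswapM, dotProduct_comm]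
  · intro x
    set v : Fin n → ℝ := WithLp.equiv 2 _ x with hv
    set w : Fin n → ℝ := B *ᵥ v with hw
    set u : Fin n → ℝ := X *ᵥ w with hu
    have hvw : v = w + S *ᵥ u := by
      have : A *ᵥ (B *ᵥ v) = v := by rw [mulVec_mulVec, hAB, one_mulVec]
      calc v = A *ᵥ (B *ᵥ v) := this.symm
        _ = w + S *ᵥ u := by
          rw [← hw, hA, add_mulVec, one_mulVec, ← mulVec_mulVec, ← hu]
    have hMv : (X * B) *ᵥ v = u := by rw [← mulVec_mulVec, ← hw, ← hu]
    have hinnM : (inner ℝ (LinearMap.toContinuousLinearMap (Matrix.toEuclideanLin (X * B)) x) x : ℝ)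
        = u ⬝ᵥ v := by
      rw [inner_toEuc, ← hv, hMv]
    have hXv : X *ᵥ v = u + X *ᵥ (S *ᵥ u) := by
      rw [hvw, mulVec_add, ← hu]
    have hinnX : (inner ℝ (LinearMap.toContinuousLinearMap (Matrix.toEuclideanLin X) x) x : ℝ)
        = (X *ᵥ v) ⬝ᵥ v := by
      rw [inner_toEuc, ← hv]
    -- nonnegativity of u ⬝ᵥ v
    have q1 : u ⬝ᵥ w = w ⬝ᵥ (X *ᵥ w) := by rw [dotProduct_comm, ← hu]
    have q2 : (0:ℝ) ≤ u ⬝ᵥ v := by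
      rw [hvw, dotProduct_add, q1]
      have := hSq u
      have := hXq w
      linarith
    -- u ⬝ᵥ v ≤ (X *ᵥ v) ⬝ᵥ v
    have q3 : (X *ᵥ v) ⬝ᵥ v = u ⬝ᵥ v + (X *ᵥ (S *ᵥ u)) ⬝ᵥ v := by
      rw [hXv, add_dotProduct]
    have q4 : (X *ᵥ (S *ᵥ u)) ⬝ᵥ v = u ⬝ᵥ (S *ᵥ u) + (S *ᵥ u) ⬝ᵥ (X *ᵥ (S *ᵥ u)) := by
      rw [hvw, dotProduct_add]
      congr 1
      · rw [dotProduct_comm, hswapX, ← hu]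
      · rw [dotProduct_comm]
    have q5 : (0:ℝ) ≤ (X *ᵥ (S *ᵥ u)) ⬝ᵥ v := by
      rw [q4]
      have := hSq u
      have := hXq (S *ᵥ u)
      linarith
    -- conclude
    rw [hinnM, abs_of_nonneg q2]
    have hle : u ⬝ᵥ v ≤ (X *ᵥ v) ⬝ᵥ v := by rw [q3]; linarith
    calc u ⬝ᵥ v ≤ (X *ᵥ v) ⬝ᵥ v := hle
      _ = (inner ℝ (LinearMap.toContinuousLinearMap (Matrix.toEuclideanLin X) x) x : ℝ) :=
        hinnX.symm
      _ ≤ ‖LinearMap.toContinuousLinearMap (Matrix.toEuclideanLin X) x‖ * ‖x‖ :=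
        real_inner_le_norm _ _
      _ ≤ specNorm X * ‖x‖ * ‖x‖ := by
        have := (LinearMap.toContinuousLinearMap (Matrix.toEuclideanLin X)).le_opNorm x
        have hxn : (0:ℝ) ≤ ‖x‖ := norm_nonneg _
        exact mul_le_mul_of_nonneg_right this hxn
      _ = specNorm X * ‖x‖ ^ 2 := by ring
end

section
/- Let A ∈ ℝ^{n×n}, B ∈ ℝ^{n×m}, let γ ∈ (0,1], let E₁, E₂ ∈ ℝ^{m×m} be symmetric positive definite, and let P₁, P₂ ∈ ℝ^{n×n} be symmetric positive semi-definite. For i = 1,2 define K_i = −γ·(E_i + γ·Bᵀ·P_i·B)^{-1}·Bᵀ·P_i·A, so that for each fixed x the vector K_i·x minimizes u ↦ (1/2)·uᵀE_i u + (γ/2)·(Ax + Bu)ᵀ P_i (Ax + Bu) over u ∈ ℝ^m. Suppose ‖E₁ − E₂‖ ≤ ε with ε ≤ λ_min(E₁)/2, and suppose ‖P₁ − P₂‖ ≤ δ. Then ‖K₁ − K₂‖ ≤ (2γ/λ_min(E₁))·max{‖A‖, ‖B‖}²·(‖K₁‖ + 1)·δ + (2/λ_min(E₁))·‖K₁‖·ε.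 -/
open Matrix

/-- The smallest eigenvalue of a real symmetric matrix (infimum of its real spectrum). -/
noncomputable def lamMin {n : ℕ} (M : Matrix (Fin n) (Fin n) ℝ) : ℝ :=
  sInf (spectrum ℝ M)

open scoped Matrix.Norms.L2Operator RealInnerProductSpace Pointwise

lemma specNorm_eq_norm {m n : ℕ} (M : Matrix (Fin m) (Fin n) ℝ) : specNorm M = ‖M‖ := rfl

lemma inner_eq_dot {k : ℕ} (x y : EuclideanSpace ℝ (Fin k)) :
    ⟪x, y⟫ = (WithLp.equiv 2 _ x) ⬝ᵥ (WithLp.equiv 2 _ y) := by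
  simp [PiLp.inner_apply, RCLike.inner_apply, dotProduct, mul_comm]

/-- Rayleigh lower bound: `lamMin M * ⟨x,x⟩ ≤ ⟨x, Mx⟩` for symmetric `M`. -/
lemma rayleigh_le {k : ℕ} {M : Matrix (Fin k) (Fin k) ℝ} (hM : M.IsHermitian)
    (x : Fin k → ℝ) : lamMin M * (x ⬝ᵥ x) ≤ x ⬝ᵥ (M *ᵥ x) := by
  have hsm : (lamMin M • (1 : Matrix (Fin k) (Fin k) ℝ)).IsHermitian := by
    simp [Matrix.IsHermitian]
  have h1 : (M - lamMin M • 1).IsHermitian := hM.sub hsm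
  have hpsd : (M - lamMin M • 1).PosSemidef := by
    refine h1.posSemidef_iff_eigenvalues_nonneg.mpr fun i => ?_
    have hmem := h1.eigenvalues_mem_spectrum_real i
    have hmem' : h1.eigenvalues i ∈ spectrum ℝ M - ({lamMin M} : Set ℝ) := by
      rw [spectrum.sub_singleton_eq,
        show (algebraMap ℝ (Matrix (Fin k) (Fin k) ℝ)) (lamMin M) = lamMin M • 1 from
          Algebra.algebraMap_eq_smul_one _]
      exact hmem
    obtain ⟨a, ha, b, hb, hab⟩ := hmem'
    rw [Set.mem_singleton_iff] at hb
    subst hb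
    have hbdd : BddBelow (spectrum ℝ M) := by
      rw [hM.spectrum_real_eq_range_eigenvalues]
      exact (Set.finite_range _).bddBelow
    have : lamMin M ≤ a := csInf_le hbdd ha
    rw [← hab]
    show 0 ≤ a - lamMin M
    linarith
  have h2 := hpsd.dotProduct_mulVec_nonneg x
  simp only [star_trivial, sub_mulVec, dotProduct_sub, smul_mulVec, one_mulVec,
    dotProduct_smul, smul_eq_mul] at h2
  linarith

lemma quad_le_norm {k : ℕ} (M : Matrix (Fin k) (Fin k) ℝ) (x : Fin k → ℝ) :
    x ⬝ᵥ (M *ᵥ x) ≤ ‖M‖ * (x ⬝ᵥ x) := by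
  set x' : EuclideanSpace ℝ (Fin k) := (WithLp.equiv 2 _).symm x with hx'
  have hx : WithLp.equiv 2 _ x' = x := rfl
  have h1 : x ⬝ᵥ (M *ᵥ x) = ⟪x', toEuclideanCLM (𝕜 := ℝ) M x'⟫ := by
    rw [inner_eq_dot]; rfl
  have h2 : ‖toEuclideanCLM (𝕜 := ℝ) M x'‖ ≤ ‖M‖ * ‖x'‖ := by
    rw [cstar_norm_def]
    exact (toEuclideanCLM (𝕜 := ℝ) M).le_opNorm x'
  have h3 : x ⬝ᵥ x = ‖x'‖ ^ 2 := by
    rw [← real_inner_self_eq_norm_sq, inner_eq_dot, hx]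
  calc x ⬝ᵥ (M *ᵥ x) = ⟪x', toEuclideanCLM (𝕜 := ℝ) M x'⟫ := h1
    _ ≤ ‖x'‖ * ‖toEuclideanCLM (𝕜 := ℝ) M x'‖ := real_inner_le_norm _ _
    _ ≤ ‖x'‖ * (‖M‖ * ‖x'‖) := by
        exact mul_le_mul_of_nonneg_left h2 (norm_nonneg _)
    _ = ‖M‖ * (x ⬝ᵥ x) := by rw [h3]; ring

lemma opNorm_inv_le {k : ℕ} {G : Matrix (Fin k) (Fin k) ℝ} {c : ℝ} (hc : 0 < c)
    (hG : IsUnit G.det)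
    (hq : ∀ x : Fin k → ℝ, c * (x ⬝ᵥ x) ≤ x ⬝ᵥ (G *ᵥ x)) :
    ‖G⁻¹‖ ≤ 1 / c := by
  have key : ∀ y : EuclideanSpace ℝ (Fin k),
      ‖toEuclideanCLM (𝕜 := ℝ) G⁻¹ y‖ ≤ (1 / c) * ‖y‖ := by
    intro y
    set x := toEuclideanCLM (𝕜 := ℝ) G⁻¹ y with hxdef
    have hxy : toEuclideanCLM (𝕜 := ℝ) G x = y := by
      have h := DFunLike.congr_fun (map_mul (toEuclideanCLM (𝕜 := ℝ)) G G⁻¹) y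
      simp only [ContinuousLinearMap.mul_apply] at h
      rw [hxdef, ← h, Matrix.mul_nonsing_inv _ hG, _root_.map_one, ContinuousLinearMap.one_apply]
    have hq' : c * ⟪x, x⟫ ≤ ⟪x, toEuclideanCLM (𝕜 := ℝ) G x⟫ := by
      rw [inner_eq_dot, inner_eq_dot]
      exact hq _
    rw [hxy, real_inner_self_eq_norm_sq] at hq'
    have h2 : ⟪x, y⟫ ≤ ‖x‖ * ‖y‖ := real_inner_le_norm _ _
    rcases (norm_nonneg x).eq_or_lt with h0 | h0
    · rw [← h0]
      positivity
    · have h3 : c * ‖x‖ ≤ ‖y‖ := by nlinarith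
      rw [one_div, inv_mul_eq_div, le_div_iff₀ hc]
      linarith
  rw [cstar_norm_def]
  exact ContinuousLinearMap.opNorm_le_bound _ (by positivity) key

lemma smul_bpb_posSemidef {n m : ℕ} (B : Matrix (Fin n) (Fin m) ℝ) {γ : ℝ} (hγ : 0 ≤ γ)
    {P : Matrix (Fin n) (Fin n) ℝ} (hP : P.PosSemidef) :
    (γ • (Bᵀ * P * B)).PosSemidef := by
  have h0 : (Bᵀ * P * B).PosSemidef := by
    have := hP.conjTranspose_mul_mul_same B
    rwa [conjTranspose_eq_transpose_of_trivial] at this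
  exact h0.smul hγ

set_option maxHeartbeats 1000000 in
/-- Bound on the change of the LQG feedback gain under perturbations of the cost matrix `E`
and the Riccati solution `P`: if `‖E₁ − E₂‖ ≤ ε ≤ λ_min(E₁)/2` and `‖P₁ − P₂‖ ≤ δ`, then
`‖K₁ − K₂‖ ≤ (2γ/λ_min(E₁))·max{‖A‖,‖B‖}²·(‖K₁‖+1)·δ + (2/λ_min(E₁))·‖K₁‖·ε`. -/
theorem gain_perturbation_bound {n m : ℕ}
    (A : Matrix (Fin n) (Fin n) ℝ) (B : Matrix (Fin n) (Fin m) ℝ)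
    (γ : ℝ) (hγ0 : 0 < γ) (hγ1 : γ ≤ 1)
    (E₁ E₂ : Matrix (Fin m) (Fin m) ℝ) (hE₁ : E₁.PosDef) (hE₂ : E₂.PosDef)
    (P₁ P₂ : Matrix (Fin n) (Fin n) ℝ) (hP₁ : P₁.PosSemidef) (hP₂ : P₂.PosSemidef)
    (K₁ K₂ : Matrix (Fin m) (Fin n) ℝ)
    (hK₁ : K₁ = -(γ • ((E₁ + γ • (Bᵀ * P₁ * B))⁻¹ * (Bᵀ * P₁ * A))))
    (hK₂ : K₂ = -(γ • ((E₂ + γ • (Bᵀ * P₂ * B))⁻¹ * (Bᵀ * P₂ * A))))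
    (ε δ : ℝ) (hE : specNorm (E₁ - E₂) ≤ ε) (hε : ε ≤ lamMin E₁ / 2)
    (hP : specNorm (P₁ - P₂) ≤ δ) :
    specNorm (K₁ - K₂) ≤
      2 * γ / lamMin E₁ * max (specNorm A) (specNorm B) ^ 2 * (specNorm K₁ + 1) * δ +
        2 / lamMin E₁ * specNorm K₁ * ε := by
  simp only [specNorm_eq_norm] at *
  rcases Nat.eq_zero_or_pos m with hm | hm
  · subst hm
    have hK : K₁ - K₂ = 0 := by ext i j; exact i.elim0
    have hlam : lamMin E₁ = 0 := by
      have hsp : spectrum ℝ E₁ = ∅ := by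
        ext r
        simp only [Set.mem_empty_iff_false, iff_false, spectrum.mem_iff, not_not]
        exact isUnit_of_subsingleton _
      rw [lamMin, hsp, Real.sInf_empty]
    rw [hK, hlam, norm_zero]
    simp
  · -- main case
    have hne : Nonempty (Fin m) := ⟨⟨0, hm⟩⟩
    set lam1 := lamMin E₁ with hlam1def
    have hlam1 : 0 < lam1 := by
      rw [hlam1def, lamMin, hE₁.1.spectrum_real_eq_range_eigenvalues]
      obtain ⟨i, hi⟩ := (Set.range_nonempty hE₁.1.eigenvalues).csInf_mem (Set.finite_range _)
      rw [← hi]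
      exact hE₁.eigenvalues_pos i
    have hδ : 0 ≤ δ := le_trans (norm_nonneg _) hP
    have hε0 : 0 ≤ ε := le_trans (norm_nonneg _) hE
    set G₁ := E₁ + γ • (Bᵀ * P₁ * B) with hG₁def
    set G₂ := E₂ + γ • (Bᵀ * P₂ * B) with hG₂def
    have hBPB₁ := smul_bpb_posSemidef B hγ0.le hP₁
    have hBPB₂ := smul_bpb_posSemidef B hγ0.le hP₂
    have hG₁ : G₁.PosDef := hE₁.add_posSemidef hBPB₁
    have hG₂ : G₂.PosDef := hE₂.add_posSemidef hBPB₂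
    have hd₁ : IsUnit G₁.det := hG₁.det_pos.ne'.isUnit
    have hd₂ : IsUnit G₂.det := hG₂.det_pos.ne'.isUnit
    have h1 : G₁ * K₁ = -(γ • (Bᵀ * P₁ * A)) := by
      rw [hK₁, Matrix.mul_neg, Matrix.mul_smul, ← Matrix.mul_assoc, Matrix.mul_nonsing_inv _ hd₁,
        Matrix.one_mul]
    have h2 : G₂ * K₂ = -(γ • (Bᵀ * P₂ * A)) := by
      rw [hK₂, Matrix.mul_neg, Matrix.mul_smul, ← Matrix.mul_assoc, Matrix.mul_nonsing_inv _ hd₂,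
        Matrix.one_mul]
    have key : G₂ * (K₁ - K₂) =
        (E₂ - E₁) * K₁ + γ • (Bᵀ * (P₂ - P₁) * (A + B * K₁)) := by
      have h1' : G₁ * K₁ + γ • (Bᵀ * P₁ * A) = 0 := by rw [h1]; abel
      have hmain : G₂ * K₁ + γ • (Bᵀ * P₂ * A) =
          (E₂ - E₁) * K₁ + γ • (Bᵀ * (P₂ - P₁) * (A + B * K₁)) +
            (G₁ * K₁ + γ • (Bᵀ * P₁ * A)) := by
        rw [hG₁def, hG₂def]
        simp only [Matrix.add_mul, Matrix.sub_mul, Matrix.mul_add, Matrix.mul_sub,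
          Matrix.smul_mul, Matrix.mul_smul, smul_add, smul_sub, Matrix.mul_assoc]
        abel
      rw [Matrix.mul_sub, h2, sub_neg_eq_add, hmain, h1', add_zero]
    have eq2 : K₁ - K₂ = G₂⁻¹ * ((E₂ - E₁) * K₁ + γ • (Bᵀ * (P₂ - P₁) * (A + B * K₁))) := by
      rw [← key, ← Matrix.mul_assoc, Matrix.nonsing_inv_mul _ hd₂, Matrix.one_mul]
    -- quadratic lower bound for G₂
    have hq : ∀ x : Fin m → ℝ, (lam1 / 2) * (x ⬝ᵥ x) ≤ x ⬝ᵥ (G₂ *ᵥ x) := by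
      intro x
      have hd0 : 0 ≤ x ⬝ᵥ x := Finset.sum_nonneg fun i _ => mul_self_nonneg _
      have r1 : lam1 * (x ⬝ᵥ x) ≤ x ⬝ᵥ (E₁ *ᵥ x) := rayleigh_le hE₁.1 x
      have r2 : x ⬝ᵥ ((E₁ - E₂) *ᵥ x) ≤ ε * (x ⬝ᵥ x) := by
        calc x ⬝ᵥ ((E₁ - E₂) *ᵥ x) ≤ ‖E₁ - E₂‖ * (x ⬝ᵥ x) := quad_le_norm _ x
          _ ≤ ε * (x ⬝ᵥ x) := mul_le_mul_of_nonneg_right hE hd0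
      have r3 : 0 ≤ x ⬝ᵥ ((γ • (Bᵀ * P₂ * B)) *ᵥ x) := by simpa using hBPB₂.dotProduct_mulVec_nonneg x
      have hsplit : x ⬝ᵥ (G₂ *ᵥ x) =
          x ⬝ᵥ (E₂ *ᵥ x) + x ⬝ᵥ ((γ • (Bᵀ * P₂ * B)) *ᵥ x) := by
        rw [hG₂def, add_mulVec, dotProduct_add]
      have hsplit2 : x ⬝ᵥ ((E₁ - E₂) *ᵥ x) = x ⬝ᵥ (E₁ *ᵥ x) - x ⬝ᵥ (E₂ *ᵥ x) := by
        rw [sub_mulVec, dotProduct_sub]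
      nlinarith
    have hinv : ‖G₂⁻¹‖ ≤ 2 / lam1 := by
      have := opNorm_inv_le (by positivity : (0:ℝ) < lam1 / 2) hd₂ hq
      rwa [one_div_div] at this
    -- norm estimates
    have hBt : ‖Bᵀ‖ = ‖B‖ := by
      rw [← conjTranspose_eq_transpose_of_trivial B, l2_opNorm_conjTranspose]
    have n1 : ‖(E₂ - E₁) * K₁‖ ≤ ε * ‖K₁‖ := by
      calc ‖(E₂ - E₁) * K₁‖ ≤ ‖E₂ - E₁‖ * ‖K₁‖ := l2_opNorm_mul _ _
        _ = ‖E₁ - E₂‖ * ‖K₁‖ := by rw [norm_sub_rev]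
        _ ≤ ε * ‖K₁‖ := mul_le_mul_of_nonneg_right hE (norm_nonneg _)
    have n2 : ‖Bᵀ * (P₂ - P₁) * (A + B * K₁)‖ ≤ ‖B‖ * (δ * (‖A‖ + ‖B‖ * ‖K₁‖)) := by
      calc ‖Bᵀ * (P₂ - P₁) * (A + B * K₁)‖
          ≤ ‖Bᵀ * (P₂ - P₁)‖ * ‖A + B * K₁‖ := l2_opNorm_mul _ _
        _ ≤ ‖Bᵀ‖ * ‖P₂ - P₁‖ * ‖A + B * K₁‖ :=
            mul_le_mul_of_nonneg_right (l2_opNorm_mul _ _) (norm_nonneg _)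
        _ ≤ ‖B‖ * δ * (‖A‖ + ‖B‖ * ‖K₁‖) := by
            have hd : ‖P₂ - P₁‖ ≤ δ := by rwa [norm_sub_rev]
            have hs : ‖A + B * K₁‖ ≤ ‖A‖ + ‖B‖ * ‖K₁‖ :=
              le_trans (norm_add_le _ _) (by
                have := l2_opNorm_mul B K₁
                linarith)
            rw [hBt]
            have h01 : 0 ≤ ‖B‖ * ‖P₂ - P₁‖ := by positivity
            have h02 : ‖B‖ * ‖P₂ - P₁‖ ≤ ‖B‖ * δ := by
              exact mul_le_mul_of_nonneg_left hd (norm_nonneg _)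
            have h03 : 0 ≤ ‖A‖ + ‖B‖ * ‖K₁‖ := by positivity
            nlinarith [norm_nonneg (A + B * K₁)]
        _ = ‖B‖ * (δ * (‖A‖ + ‖B‖ * ‖K₁‖)) := by ring
    have n3 : ‖(E₂ - E₁) * K₁ + γ • (Bᵀ * (P₂ - P₁) * (A + B * K₁))‖ ≤
        ε * ‖K₁‖ + γ * (‖B‖ * (δ * (‖A‖ + ‖B‖ * ‖K₁‖))) := by
      calc ‖(E₂ - E₁) * K₁ + γ • (Bᵀ * (P₂ - P₁) * (A + B * K₁))‖
          ≤ ‖(E₂ - E₁) * K₁‖ + ‖γ • (Bᵀ * (P₂ - P₁) * (A + B * K₁))‖ := norm_add_le _ _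
        _ = ‖(E₂ - E₁) * K₁‖ + γ * ‖Bᵀ * (P₂ - P₁) * (A + B * K₁)‖ := by
            rw [norm_smul, Real.norm_eq_abs, abs_of_pos hγ0]
        _ ≤ ε * ‖K₁‖ + γ * (‖B‖ * (δ * (‖A‖ + ‖B‖ * ‖K₁‖))) := by
            have := mul_le_mul_of_nonneg_left n2 hγ0.le
            linarith
    have main : ‖K₁ - K₂‖ ≤
        (2 / lam1) * (ε * ‖K₁‖ + γ * (‖B‖ * (δ * (‖A‖ + ‖B‖ * ‖K₁‖)))) := by
      calc ‖K₁ - K₂‖ = ‖G₂⁻¹ * ((E₂ - E₁) * K₁ + γ • (Bᵀ * (P₂ - P₁) * (A + B * K₁)))‖ := by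
            rw [← eq2]
        _ ≤ ‖G₂⁻¹‖ * ‖(E₂ - E₁) * K₁ + γ • (Bᵀ * (P₂ - P₁) * (A + B * K₁))‖ :=
            l2_opNorm_mul _ _
        _ ≤ (2 / lam1) * (ε * ‖K₁‖ + γ * (‖B‖ * (δ * (‖A‖ + ‖B‖ * ‖K₁‖)))) := by
            apply mul_le_mul hinv n3 (norm_nonneg _) (by positivity)
    -- final arithmetic
    set a := ‖A‖; set b := ‖B‖; set kk := ‖K₁‖; set Mx := max a b
    have ha : 0 ≤ a := norm_nonneg _
    have hb : 0 ≤ b := norm_nonneg _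
    have hk : 0 ≤ kk := norm_nonneg _
    have hM1 : a ≤ Mx := le_max_left _ _
    have hM2 : b ≤ Mx := le_max_right _ _
    have hM0 : 0 ≤ Mx := le_trans ha hM1
    have e1 : b * a ≤ Mx * Mx := mul_le_mul hM2 hM1 ha hM0
    have e2 : b * b * kk ≤ Mx * Mx * kk :=
      mul_le_mul_of_nonneg_right (mul_le_mul hM2 hM2 hb hM0) hk
    have hfin : b * (a + b * kk) ≤ Mx ^ 2 * (kk + 1) := by nlinarith [e1, e2]
    have : (2 / lam1) * (γ * (‖B‖ * (δ * (‖A‖ + ‖B‖ * ‖K₁‖)))) ≤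
        2 * γ / lam1 * Mx ^ 2 * (kk + 1) * δ := by
      have h4 : 0 ≤ 2 / lam1 * γ := by positivity
      have h5 : b * (δ * (a + b * kk)) ≤ Mx ^ 2 * (kk + 1) * δ := by
        have := mul_le_mul_of_nonneg_right hfin hδ
        nlinarith [this]
      calc (2 / lam1) * (γ * (b * (δ * (a + b * kk))))
          = (2 / lam1 * γ) * (b * (δ * (a + b * kk))) := by ring
        _ ≤ (2 / lam1 * γ) * (Mx ^ 2 * (kk + 1) * δ) := mul_le_mul_of_nonneg_left h5 h4
        _ = 2 * γ / lam1 * Mx ^ 2 * (kk + 1) * δ := by ring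
    calc ‖K₁ - K₂‖ ≤ (2 / lam1) * (ε * kk + γ * (b * (δ * (a + b * kk)))) := main
      _ = (2 / lam1) * (γ * (b * (δ * (a + b * kk)))) + 2 / lam1 * kk * ε := by ring
      _ ≤ 2 * γ / lam1 * Mx ^ 2 * (kk + 1) * δ + 2 / lam1 * kk * ε := by linarith
end

section
/- Let B ∈ ℝ^{n×m}, γ ∈ (0,1]. Let E*, E† ∈ ℝ^{m×m} be symmetric positive definite, P*, P† ∈ ℝ^{n×n} symmetric positive semi-definite, and h*, h† ∈ ℝ^n. Define k* = −(γ/2)·(E* + γ·Bᵀ·P*·B)^{-1}·Bᵀ·h* and k† = −(γ/2)·(E† + γ·Bᵀ·P†·B)^{-1}·Bᵀ·h†, i.e., k* (resp. k†) is the unique minimizer of k ↦ kᵀ(E* + γBᵀP*B)k + γ·(h*)ᵀBk (resp. with daggered quantities). Suppose ‖E† − E*‖ ≤ λ_min(E*)/2. Then ‖k† − k*‖ ≤ Γ₇·‖E† − E*‖ + Γ₈·‖P† − P*‖ + Γ₉·‖h† − h*‖, where Γ₇ = (4/λ_min(E*))·‖k*‖, Γ₈ = (4γ/λ_min(E*))·‖k*‖·‖B‖²,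 and Γ₉ = (4γ/λ_min(E*))·‖B‖. -/
open Matrix

/-- The Euclidean norm of a real vector. -/
noncomputable def vecNorm {n : ℕ} (v : Fin n → ℝ) : ℝ :=
  ‖(EuclideanSpace.equiv (Fin n) ℝ).symm v‖

lemma vecNorm_eq {n : ℕ} (v : Fin n → ℝ) :
    vecNorm v = ‖(WithLp.equiv 2 (Fin n → ℝ)).symm v‖ := rfl

lemma vecNorm_nonneg {n : ℕ} (v : Fin n → ℝ) : 0 ≤ vecNorm v := norm_nonneg _

lemma specNorm_nonneg {m n : ℕ} (M : Matrix (Fin m) (Fin n) ℝ) : 0 ≤ specNorm M := norm_nonneg _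

lemma dot_eq_inner {n : ℕ} (u v : Fin n → ℝ) :
    u ⬝ᵥ v = @inner ℝ _ _ ((WithLp.equiv 2 (Fin n → ℝ)).symm u)
      ((WithLp.equiv 2 (Fin n → ℝ)).symm v) := by
  simp [PiLp.inner_apply, dotProduct, mul_comm]

lemma abs_dot_le {n : ℕ} (u v : Fin n → ℝ) : |u ⬝ᵥ v| ≤ vecNorm u * vecNorm v := by
  rw [dot_eq_inner, vecNorm_eq, vecNorm_eq]
  exact abs_real_inner_le_norm _ _

lemma mulVec_vecNorm_le {m n : ℕ} (M : Matrix (Fin m) (Fin n) ℝ) (v : Fin n → ℝ) :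
    vecNorm (M *ᵥ v) ≤ specNorm M * vecNorm v := by
  have h := (LinearMap.toContinuousLinearMap (Matrix.toEuclideanLin M)).le_opNorm
    ((WithLp.equiv 2 (Fin n → ℝ)).symm v)
  simpa [vecNorm_eq, specNorm, Matrix.toEuclideanLin_apply_piLp_toLp] using h

lemma spectrum_subset_range {k : ℕ} {A : Matrix (Fin k) (Fin k) ℝ} (hA : A.IsHermitian) :
    spectrum ℝ A ⊆ Set.range hA.eigenvalues := by
  intro μ hμ
  rw [← Matrix.spectrum_toEuclideanLin (𝕜 := ℝ) (A := A)] at hμ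
  have hev : Module.End.HasEigenvalue (Matrix.toEuclideanLin A) μ :=
    Module.End.HasEigenvalue.of_mem_spectrum hμ
  obtain ⟨v, hv⟩ := hev.exists_hasEigenvector
  by_contra hr
  have hkey : ∀ i, @inner ℝ _ _ (hA.eigenvectorBasis i) v = 0 := by
    intro i
    have hb : Matrix.toEuclideanLin A (hA.eigenvectorBasis i)
        = hA.eigenvalues i • hA.eigenvectorBasis i := by
      apply (WithLp.equiv 2 _).injective
      simpa [Matrix.ofLp_toEuclideanLin_apply] using hA.mulVec_eigenvectorBasis i
    have hsym := (Matrix.isHermitian_iff_isSymmetric.1 hA) (hA.eigenvectorBasis i) v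
    rw [hb, hv.apply_eq_smul] at hsym
    rw [inner_smul_left, inner_smul_right] at hsym
    have hne : hA.eigenvalues i ≠ μ := fun h => hr ⟨i, h⟩
    have : (hA.eigenvalues i - μ) * @inner ℝ _ _ (hA.eigenvectorBasis i) v = 0 := by
      simp only [starRingEnd_apply, star_trivial] at hsym
      nlinarith [hsym]
    rcases mul_eq_zero.mp this with h | h
    · exact absurd (sub_eq_zero.mp h) hne
    · exact h
  have : v = 0 := by
    apply hA.eigenvectorBasis.repr.injective
    rw [map_zero]
    ext i
    simp [hA.eigenvectorBasis.repr_apply_apply, real_inner_comm, hkey i]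
  exact hv.2 this

lemma lamMin_le_eigenvalues {k : ℕ} {A : Matrix (Fin k) (Fin k) ℝ} (hA : A.IsHermitian)
    (i : Fin k) : lamMin A ≤ hA.eigenvalues i := by
  refine csInf_le ?_ (hA.eigenvalues_mem_spectrum_real i)
  exact ((Set.finite_range hA.eigenvalues).subset (spectrum_subset_range hA)).bddBelow

lemma lamMin_pos {k : ℕ} [NeZero k] {A : Matrix (Fin k) (Fin k) ℝ} (hA : A.PosDef) :
    0 < lamMin A := by
  obtain ⟨i, hi⟩ := Finite.exists_min hA.1.eigenvalues
  refine lt_of_lt_of_le (hA.eigenvalues_pos i) (le_csInf ?_ ?_)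
  · exact ⟨_, hA.1.eigenvalues_mem_spectrum_real i⟩
  · intro μ hμ
    obtain ⟨j, rfl⟩ := spectrum_subset_range hA.1 hμ
    exact hi j

lemma rayleigh_lower {k : ℕ} {A : Matrix (Fin k) (Fin k) ℝ} (hA : A.IsHermitian)
    (v : Fin k → ℝ) : lamMin A * vecNorm v ^ 2 ≤ v ⬝ᵥ A *ᵥ v := by
  set x : EuclideanSpace ℝ (Fin k) := (WithLp.equiv 2 (Fin k → ℝ)).symm v with hx
  have hdot : v ⬝ᵥ A *ᵥ v = @inner ℝ _ _ x (Matrix.toEuclideanLin A x) := by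
    simp [Matrix.toEuclideanLin_apply_piLp_toLp, hx, PiLp.inner_apply, dotProduct, mul_comm]
  have hb : ∀ i, Matrix.toEuclideanLin A (hA.eigenvectorBasis i)
      = hA.eigenvalues i • hA.eigenvectorBasis i := fun i => by
    apply (WithLp.equiv 2 _).injective
    simpa [Matrix.ofLp_toEuclideanLin_apply] using hA.mulVec_eigenvectorBasis i
  have hexp : @inner ℝ _ _ x (Matrix.toEuclideanLin A x)
      = ∑ i, hA.eigenvalues i * (@inner ℝ _ _ x (hA.eigenvectorBasis i))^2 := by
    rw [← hA.eigenvectorBasis.sum_inner_mul_inner x (Matrix.toEuclideanLin A x)]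
    congr 1
    ext i
    have : @inner ℝ _ _ (hA.eigenvectorBasis i) (Matrix.toEuclideanLin A x)
        = hA.eigenvalues i * @inner ℝ _ _ (hA.eigenvectorBasis i) x := by
      rw [← (Matrix.isHermitian_iff_isSymmetric.1 hA) (hA.eigenvectorBasis i) x, hb i,
        inner_smul_left]
      simp
    rw [this, real_inner_comm (hA.eigenvectorBasis i) x]
    ring
  have hnorm : vecNorm v ^ 2 = ∑ i, (@inner ℝ _ _ x (hA.eigenvectorBasis i))^2 := by
    have := hA.eigenvectorBasis.sum_inner_mul_inner x x
    rw [real_inner_self_eq_norm_sq] at this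
    have hv : vecNorm v = ‖x‖ := rfl
    rw [hv, ← this]
    congr 1
    ext i
    rw [real_inner_comm x (hA.eigenvectorBasis i)]
    ring
  rw [hdot, hexp, hnorm, Finset.mul_sum]
  apply Finset.sum_le_sum
  intro i _
  have h1 := lamMin_le_eigenvalues hA i
  nlinarith [sq_nonneg (@inner ℝ _ _ x (hA.eigenvectorBasis i))]

lemma BtPB_posSemidef {n m : ℕ} (B : Matrix (Fin n) (Fin m) ℝ)
    {P : Matrix (Fin n) (Fin n) ℝ} (hP : P.PosSemidef) : (Bᵀ * P * B).PosSemidef := by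
  have := hP.conjTranspose_mul_mul_same B
  simpa [conjTranspose_eq_transpose_of_trivial] using this

lemma smul_posSemidef {k : ℕ} {γ : ℝ} (hγ : 0 ≤ γ) {A : Matrix (Fin k) (Fin k) ℝ}
    (hA : A.PosSemidef) : (γ • A).PosSemidef := by
  refine posSemidef_iff_dotProduct_mulVec.mpr ⟨?_, fun x => ?_⟩
  · unfold Matrix.IsHermitian
    rw [conjTranspose_smul, hA.1]
    simp
  · rw [Matrix.smul_mulVec, dotProduct_smul]
    exact smul_nonneg hγ (hA.dotProduct_mulVec_nonneg x)

/-- Bound on the change of the affine term `k` of the optimal policy: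
if `‖E† − E*‖ ≤ λ_min(E*)/2` then `‖k† − k*‖ ≤ Γ₇‖E† − E*‖ + Γ₈‖P† − P*‖ + Γ₉‖h† − h*‖`,
where `Γ₇ = (4/λ_min(E*))‖k*‖`, `Γ₈ = (4γ/λ_min(E*))‖k*‖‖B‖²`, and
`Γ₉ = (4γ/λ_min(E*))‖B‖`. -/
theorem affine_term_perturbation_bound {n m : ℕ}
    (B : Matrix (Fin n) (Fin m) ℝ) (γ : ℝ) (hγ0 : 0 < γ) (hγ1 : γ ≤ 1)
    (Estar Edag : Matrix (Fin m) (Fin m) ℝ) (hEstar : Estar.PosDef) (hEdag : Edag.PosDef)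
    (Pstar Pdag : Matrix (Fin n) (Fin n) ℝ) (hPstar : Pstar.PosSemidef)
    (hPdag : Pdag.PosSemidef)
    (hstar hdag : Fin n → ℝ) (kstar kdag : Fin m → ℝ)
    (hkstar : kstar = -((γ / 2) • ((Estar + γ • (Bᵀ * Pstar * B))⁻¹.mulVec (Bᵀ.mulVec hstar))))
    (hkdag : kdag = -((γ / 2) • ((Edag + γ • (Bᵀ * Pdag * B))⁻¹.mulVec (Bᵀ.mulVec hdag))))
    (hE : specNorm (Edag - Estar) ≤ lamMin Estar / 2) :
    vecNorm (kdag - kstar) ≤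
      4 / lamMin Estar * vecNorm kstar * specNorm (Edag - Estar) +
        4 * γ / lamMin Estar * vecNorm kstar * specNorm B ^ 2 * specNorm (Pdag - Pstar) +
          4 * γ / lamMin Estar * specNorm B * vecNorm (hdag - hstar) := by
  rcases Nat.eq_zero_or_pos m with hm | hm
  · subst hm
    have hspec : spectrum ℝ Estar = ∅ := by
      ext μ
      simp only [Set.mem_empty_iff_false, iff_false]
      intro hμ
      exact (spectrum.notMem_iff.mpr (isUnit_of_subsingleton _)) hμ
    have hlam : lamMin Estar = 0 := by rw [lamMin, hspec, Real.sInf_empty]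
    have hd : kdag - kstar = 0 := funext fun i => i.elim0
    rw [hd, hlam]
    have hv0 : vecNorm (0 : Fin 0 → ℝ) = 0 := by
      rw [vecNorm_eq]
      exact norm_zero
    rw [hv0]
    simp
  · haveI : NeZero m := ⟨hm.ne'⟩
    set lam := lamMin Estar with hlamdef
    have hlam : 0 < lam := lamMin_pos hEstar
    set ΔE := Edag - Estar with hΔE
    set ΔP := Pdag - Pstar with hΔP
    set Δh := hdag - hstar with hΔh
    set d := kdag - kstar with hd
    set Ms := Estar + γ • (Bᵀ * Pstar * B) with hMs
    set Md := Edag + γ • (Bᵀ * Pdag * B) with hMd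
    clear_value lam ΔE ΔP Δh d Ms Md
    have hMsd : Ms.PosDef := by
      rw [hMs]
      exact hEstar.add_posSemidef (smul_posSemidef hγ0.le (BtPB_posSemidef B hPstar))
    have hMdd : Md.PosDef := by
      rw [hMd]
      exact hEdag.add_posSemidef (smul_posSemidef hγ0.le (BtPB_posSemidef B hPdag))
    -- key equations
    have heqd : Md *ᵥ kdag = -((γ / 2) • (Bᵀ *ᵥ hdag)) := by
      rw [hkdag, Matrix.mulVec_neg, Matrix.mulVec_smul, Matrix.mulVec_mulVec,
        Matrix.mul_nonsing_inv _ ((Matrix.isUnit_iff_isUnit_det _).mp hMdd.isUnit),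
        Matrix.one_mulVec]
    have heqs : Ms *ᵥ kstar = -((γ / 2) • (Bᵀ *ᵥ hstar)) := by
      rw [hkstar, Matrix.mulVec_neg, Matrix.mulVec_smul, Matrix.mulVec_mulVec,
        Matrix.mul_nonsing_inv _ ((Matrix.isUnit_iff_isUnit_det _).mp hMsd.isUnit),
        Matrix.one_mulVec]
    have hMsplit : Md = Ms + ΔE + γ • (Bᵀ * ΔP * B) := by
      rw [hMd, hMs, hΔE, hΔP]
      simp only [Matrix.mul_sub, Matrix.sub_mul, smul_sub]
      abel
    have hkey : Md *ᵥ d = -((γ / 2) • (Bᵀ *ᵥ Δh)) - ΔE *ᵥ kstar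
        - γ • ((Bᵀ * ΔP * B) *ᵥ kstar) := by
      rw [hd, Matrix.mulVec_sub, heqd]
      rw [hMsplit]
      rw [Matrix.add_mulVec, Matrix.add_mulVec, heqs, Matrix.smul_mulVec]
      rw [hΔh]
      simp only [Matrix.mulVec_sub, smul_sub]
      abel
    -- lower bound
    have hlow : lam / 2 * vecNorm d ^ 2 ≤ d ⬝ᵥ Md *ᵥ d := by
      have h1 : d ⬝ᵥ Md *ᵥ d
          = d ⬝ᵥ Estar *ᵥ d + d ⬝ᵥ ΔE *ᵥ d + γ * (d ⬝ᵥ (Bᵀ * Pdag * B) *ᵥ d) := by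
        rw [hMd, Matrix.add_mulVec, dotProduct_add, Matrix.smul_mulVec, dotProduct_smul]
        have : Edag = Estar + ΔE := by rw [hΔE]; abel
        rw [this, Matrix.add_mulVec, dotProduct_add, smul_eq_mul]
      have h2 : lam * vecNorm d ^ 2 ≤ d ⬝ᵥ Estar *ᵥ d := by
        rw [hlamdef]; exact rayleigh_lower hEstar.1 d
      have h3 : -(lam / 2 * vecNorm d ^ 2) ≤ d ⬝ᵥ ΔE *ᵥ d := by
        have habs := abs_dot_le d (ΔE *ᵥ d)
        have hm2 := mulVec_vecNorm_le ΔE d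
        have hb : |d ⬝ᵥ ΔE *ᵥ d| ≤ lam / 2 * vecNorm d ^ 2 := by
          calc |d ⬝ᵥ ΔE *ᵥ d| ≤ vecNorm d * vecNorm (ΔE *ᵥ d) := habs
            _ ≤ vecNorm d * (specNorm ΔE * vecNorm d) := by
                exact mul_le_mul_of_nonneg_left hm2 (vecNorm_nonneg d)
            _ ≤ vecNorm d * (lam / 2 * vecNorm d) := by
                refine mul_le_mul_of_nonneg_left ?_ (vecNorm_nonneg d)
                exact mul_le_mul_of_nonneg_right hE (vecNorm_nonneg d)
            _ = lam / 2 * vecNorm d ^ 2 := by ring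
        linarith [neg_abs_le (d ⬝ᵥ ΔE *ᵥ d)]
      have h4 : 0 ≤ d ⬝ᵥ (Bᵀ * Pdag * B) *ᵥ d := by
        have := (BtPB_posSemidef B hPdag).dotProduct_mulVec_nonneg d
        simpa using this
      linarith only [h1, h2, h3, mul_nonneg hγ0.le h4]
    -- upper bound
    have hup : d ⬝ᵥ Md *ᵥ d ≤ vecNorm d *
        (specNorm ΔE * vecNorm kstar + γ * specNorm B ^ 2 * specNorm ΔP * vecNorm kstar
          + γ / 2 * specNorm B * vecNorm Δh) := by
      rw [hkey]
      have hBd : ∀ (w : Fin n → ℝ), d ⬝ᵥ Bᵀ *ᵥ w = (B *ᵥ d) ⬝ᵥ w := by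
        intro w
        rw [Matrix.dotProduct_mulVec, Matrix.vecMul_transpose]
      have hBdnorm : vecNorm (B *ᵥ d) ≤ specNorm B * vecNorm d := mulVec_vecNorm_le B d
      have ht1 : d ⬝ᵥ (-((γ / 2) • (Bᵀ *ᵥ Δh))) ≤ γ / 2 * (specNorm B * vecNorm d * vecNorm Δh) := by
        rw [dotProduct_neg, dotProduct_smul, hBd]
        have habs := abs_dot_le (B *ᵥ d) Δh
        have : |(B *ᵥ d) ⬝ᵥ Δh| ≤ specNorm B * vecNorm d * vecNorm Δh := by
          calc |(B *ᵥ d) ⬝ᵥ Δh| ≤ vecNorm (B *ᵥ d) * vecNorm Δh := habs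
            _ ≤ specNorm B * vecNorm d * vecNorm Δh :=
                mul_le_mul_of_nonneg_right hBdnorm (vecNorm_nonneg Δh)
        have h' := neg_abs_le ((B *ᵥ d) ⬝ᵥ Δh)
        rw [smul_eq_mul]
        have hz : -((B *ᵥ d) ⬝ᵥ Δh) ≤ specNorm B * vecNorm d * vecNorm Δh := by
          linarith only [h', this]
        have hmul := mul_le_mul_of_nonneg_left hz (by linarith : (0:ℝ) ≤ γ / 2)
        linarith only [hmul]
      have ht2 : -(d ⬝ᵥ ΔE *ᵥ kstar) ≤ specNorm ΔE * vecNorm kstar * vecNorm d := by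
        have habs := abs_dot_le d (ΔE *ᵥ kstar)
        have hm2 := mulVec_vecNorm_le ΔE kstar
        have : |d ⬝ᵥ ΔE *ᵥ kstar| ≤ vecNorm d * (specNorm ΔE * vecNorm kstar) := by
          calc |d ⬝ᵥ ΔE *ᵥ kstar| ≤ vecNorm d * vecNorm (ΔE *ᵥ kstar) := habs
            _ ≤ vecNorm d * (specNorm ΔE * vecNorm kstar) :=
                mul_le_mul_of_nonneg_left hm2 (vecNorm_nonneg d)
        linarith only [this, neg_abs_le (d ⬝ᵥ ΔE *ᵥ kstar)]
      have ht3 : -(d ⬝ᵥ ((Bᵀ * ΔP * B) *ᵥ kstar))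
          ≤ specNorm B ^ 2 * specNorm ΔP * vecNorm kstar * vecNorm d := by
        have hrw : d ⬝ᵥ ((Bᵀ * ΔP * B) *ᵥ kstar) = (B *ᵥ d) ⬝ᵥ (ΔP *ᵥ (B *ᵥ kstar)) := by
          rw [← Matrix.mulVec_mulVec, ← Matrix.mulVec_mulVec, hBd]
        rw [hrw]
        have habs := abs_dot_le (B *ᵥ d) (ΔP *ᵥ (B *ᵥ kstar))
        have hm2 : vecNorm (ΔP *ᵥ (B *ᵥ kstar)) ≤ specNorm ΔP * (specNorm B * vecNorm kstar) := by
          calc vecNorm (ΔP *ᵥ (B *ᵥ kstar)) ≤ specNorm ΔP * vecNorm (B *ᵥ kstar) :=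
              mulVec_vecNorm_le _ _
            _ ≤ specNorm ΔP * (specNorm B * vecNorm kstar) :=
              mul_le_mul_of_nonneg_left (mulVec_vecNorm_le B kstar) (specNorm_nonneg ΔP)
        have hb : |(B *ᵥ d) ⬝ᵥ (ΔP *ᵥ (B *ᵥ kstar))|
            ≤ specNorm B * vecNorm d * (specNorm ΔP * (specNorm B * vecNorm kstar)) := by
          calc |(B *ᵥ d) ⬝ᵥ (ΔP *ᵥ (B *ᵥ kstar))|
              ≤ vecNorm (B *ᵥ d) * vecNorm (ΔP *ᵥ (B *ᵥ kstar)) := habs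
            _ ≤ (specNorm B * vecNorm d) * (specNorm ΔP * (specNorm B * vecNorm kstar)) := by
                apply mul_le_mul hBdnorm hm2 (vecNorm_nonneg _)
                exact mul_nonneg (specNorm_nonneg B) (vecNorm_nonneg d)
        have h' := neg_abs_le ((B *ᵥ d) ⬝ᵥ (ΔP *ᵥ (B *ᵥ kstar)))
        linarith only [hb, h']
      have hexpand : d ⬝ᵥ (-((γ / 2) • (Bᵀ *ᵥ Δh)) - ΔE *ᵥ kstar - γ • ((Bᵀ * ΔP * B) *ᵥ kstar))
          = d ⬝ᵥ (-((γ / 2) • (Bᵀ *ᵥ Δh))) + (-(d ⬝ᵥ ΔE *ᵥ kstar))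
            + γ * (-(d ⬝ᵥ ((Bᵀ * ΔP * B) *ᵥ kstar))) := by
        simp only [dotProduct_sub, dotProduct_smul, smul_eq_mul]
        ring
      rw [hexpand]
      have hγt3 : γ * (-(d ⬝ᵥ ((Bᵀ * ΔP * B) *ᵥ kstar)))
          ≤ γ * (specNorm B ^ 2 * specNorm ΔP * vecNorm kstar * vecNorm d) :=
        mul_le_mul_of_nonneg_left ht3 hγ0.le
      linarith only [ht1, ht2, hγt3]
    -- combine
    obtain ⟨S, hSdef⟩ : ∃ S : ℝ, S = specNorm ΔE * vecNorm kstar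
        + γ * specNorm B ^ 2 * specNorm ΔP * vecNorm kstar
        + γ / 2 * specNorm B * vecNorm Δh := ⟨_, rfl⟩
    have hS : lam / 2 * vecNorm d ^ 2 ≤ vecNorm d * S := by
      rw [hSdef]; exact le_trans hlow hup
    have hcore : lam * vecNorm d ≤ 2 * S := by
      rcases eq_or_lt_of_le (vecNorm_nonneg d) with h0 | h0
      · have hSnn : 0 ≤ S := by
          rw [hSdef]
          have t1 := mul_nonneg (specNorm_nonneg ΔE) (vecNorm_nonneg kstar)
          have t2 := mul_nonneg (mul_nonneg (mul_nonneg hγ0.le (sq_nonneg (specNorm B)))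
            (specNorm_nonneg ΔP)) (vecNorm_nonneg kstar)
          have t3 := mul_nonneg (mul_nonneg (by linarith : (0:ℝ) ≤ γ / 2) (specNorm_nonneg B))
            (vecNorm_nonneg Δh)
          linarith only [t1, t2, t3]
        rw [← h0]
        linarith only [hSnn]
      · by_contra hcon
        push_neg at hcon
        have hx := mul_lt_mul_of_pos_left hcon h0
        linarith only [hS, hx]
    rw [hSdef] at hcore
    refine le_of_mul_le_mul_left ?_ hlam
    have hlamne : lam ≠ 0 := hlam.ne'
    have hR : lam * (4 / lam * vecNorm kstar * specNorm ΔE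
        + 4 * γ / lam * vecNorm kstar * specNorm B ^ 2 * specNorm ΔP
        + 4 * γ / lam * specNorm B * vecNorm Δh)
        = 4 * vecNorm kstar * specNorm ΔE
          + 4 * γ * vecNorm kstar * specNorm B ^ 2 * specNorm ΔP
          + 4 * γ * specNorm B * vecNorm Δh := by
      field_simp
    rw [hR]
    have t1 := mul_nonneg (specNorm_nonneg ΔE) (vecNorm_nonneg kstar)
    have t2 := mul_nonneg (mul_nonneg (mul_nonneg hγ0.le (sq_nonneg (specNorm B)))
      (specNorm_nonneg ΔP)) (vecNorm_nonneg kstar)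
    have t3 := mul_nonneg (mul_nonneg hγ0.le (specNorm_nonneg B)) (vecNorm_nonneg Δh)
    linarith only [hcore, t1, t2, t3]
end
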